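/- Let a : ℕ → ℝ satisfy a_0 > 0 and a_j ≥ 0 for all j ≥ 2 (a_1 may be an arbitrary real number). Suppose there exists a real number α > 0 such that the family (a_j·α^j)_{j≥0} is summable and ∑'_{j≥0} a_j·α^j = 0. Then the formal power series A = ∑_{j≥0} a_j·X^j over ℝ is invertible in ℝ⟦X⟧ and every coefficient of A⁻¹ is strictly positive. -/

import Mathlib

set_option maxHeartbeats 1600000

private theorem inv_coeff_aux (a b : ℕ → ℝ)
    (hb : ∀ n, PowerSeries.coeff n (PowerSeries.mk a)⁻¹ = b n) (m : ℕ) :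
    b (m + 1) = -(a 0)⁻¹ *
        ∑ x ∈ Finset.HasAntidiagonal.antidiagonal (m + 1),
          if x.2 < m + 1 then a x.1 * b x.2 else 0 := by
  rw [← hb]
  rw [PowerSeries.coeff_inv, if_neg (Nat.succ_ne_zero m), PowerSeries.constantCoeff_mk]
  refine congrArg _ (Finset.sum_congr rfl fun x _ => ?_)
  by_cases h : x.2 < m + 1
  · rw [if_pos h, if_pos h, PowerSeries.coeff_mk, hb]
  · rw [if_neg h, if_neg h]


/-- (Piontkovsky)  If `a_0 > 0`, `a_j ≥ 0` for all `j ≥ 2` (`a_1` arbitrary), and the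
series `∑ a_j·x^j` converges to `0` at some `α > 0`, then the formal power series
`A = ∑ a_j·X^j ∈ ℝ⟦X⟧` is invertible and all coefficients of `A⁻¹` are strictly
positive. -/
theorem inv_coeff_pos_of_pos_root (a : ℕ → ℝ) (h0 : 0 < a 0)
    (ha : ∀ j, 2 ≤ j → 0 ≤ a j)
    (hroot : ∃ α : ℝ, 0 < α ∧ Summable (fun j : ℕ => a j * α ^ j) ∧
      ∑' j : ℕ, a j * α ^ j = 0) :
    IsUnit (PowerSeries.mk a) ∧
      ∀ n : ℕ, 0 < PowerSeries.coeff n (PowerSeries.mk a)⁻¹ := by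
  obtain ⟨α, hα, hsum, hzero⟩ := hroot
  have hne : (PowerSeries.constantCoeff) (PowerSeries.mk a) ≠ 0 := by
    simpa using h0.ne'
  obtain ⟨b, hb⟩ : ∃ b : ℕ → ℝ, ∀ n, PowerSeries.coeff n (PowerSeries.mk a)⁻¹ = b n :=
    ⟨_, fun _ => rfl⟩
  -- tail sum facts
  have hsum2 : Summable (fun j : ℕ => a (j + 2) * α ^ (j + 2)) :=
    (summable_nat_add_iff 2).2 hsum
  have hT : ∑' j : ℕ, a (j + 2) * α ^ (j + 2) = -(a 0 + a 1 * α) := by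
    have := Summable.sum_add_tsum_nat_add 2 hsum
    rw [hzero] at this
    simp only [Finset.sum_range_succ, Finset.sum_range_zero, pow_zero, pow_one,
      zero_add, mul_one] at this
    linarith
  have hTle : ∀ m : ℕ, ∑ i ∈ Finset.range m, a (i + 2) * α ^ (i + 2)
      ≤ -(a 0 + a 1 * α) := by
    intro m
    rw [← hT]
    exact Summable.sum_le_tsum (Finset.range m)
      (fun i _ => mul_nonneg (ha _ (by omega)) (pow_nonneg hα.le _)) hsum2
  -- b 0
  have hb0 : b 0 = (a 0)⁻¹ := by
    rw [← hb, PowerSeries.coeff_zero_eq_constantCoeff_apply, PowerSeries.constantCoeff_inv,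
      PowerSeries.constantCoeff_mk]
  -- recursion
  have hrec : ∀ m : ℕ,
      a 0 * b (m + 1) = -(a 1 * b m + ∑ i ∈ Finset.range m, a (i + 2) * b (m - (i + 1))) := by
    intro m
    have h1 := inv_coeff_aux a b hb m
    rw [Finset.Nat.sum_antidiagonal_eq_sum_range_succ_mk] at h1
    rw [Finset.sum_range_succ'] at h1
    simp only [Nat.sub_zero, lt_irrefl, if_false, add_zero] at h1
    have h2 : ∀ i ∈ Finset.range (m + 1),
        (if m + 1 - (i + 1) < m + 1 then a (i + 1) * b (m + 1 - (i + 1)) else 0)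
          = a (i + 1) * b (m - i) := by
      intro i hi
      rw [if_pos (by omega)]
      congr 2
      omega
    rw [Finset.sum_congr rfl h2] at h1
    rw [Finset.sum_range_succ'] at h1
    simp only [Nat.sub_zero] at h1
    rw [h1]
    field_simp
    ring
  -- main induction
  have key : ∀ n : ℕ, 0 < b n ∧ ∀ k, k ≤ n → b k ≤ α ^ (n - k) * b n := by
    intro n
    induction n with
    | zero =>
      refine ⟨by rw [hb0]; positivity, ?_⟩
      intro k hk
      interval_cases k
      simp
    | succ m ih =>
      obtain ⟨hpos, hchain⟩ := ih
      have hsumb : ∑ i ∈ Finset.range m, a (i + 2) * b (m - (i + 1))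
          ≤ (α⁻¹ * -(a 0 + a 1 * α)) * b m := by
      -- termwise bound then sum bound
        have hterm : ∀ i ∈ Finset.range m,
            a (i + 2) * b (m - (i + 1)) ≤ a (i + 2) * (α ^ (i + 1) * b m) := by
          intro i hi
          have hi' : i < m := Finset.mem_range.mp hi
          have := hchain (m - (i + 1)) (by omega)
          have heq : m - (m - (i + 1)) = i + 1 := by omega
          rw [heq] at this
          exact mul_le_mul_of_nonneg_left this (ha _ (by omega))
        calc ∑ i ∈ Finset.range m, a (i + 2) * b (m - (i + 1))
            ≤ ∑ i ∈ Finset.range m, a (i + 2) * (α ^ (i + 1) * b m) :=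
              Finset.sum_le_sum hterm
          _ = (∑ i ∈ Finset.range m, a (i + 2) * α ^ (i + 1)) * b m := by
              rw [Finset.sum_mul]; congr 1; ext i; ring
          _ ≤ (α⁻¹ * -(a 0 + a 1 * α)) * b m := by
              refine mul_le_mul_of_nonneg_right ?_ hpos.le
              have : ∑ i ∈ Finset.range m, a (i + 2) * α ^ (i + 1)
                  = α⁻¹ * ∑ i ∈ Finset.range m, a (i + 2) * α ^ (i + 2) := by
                rw [Finset.mul_sum]
                refine Finset.sum_congr rfl fun i _ => ?_
                field_simp
                ring
              rw [this]
              exact mul_le_mul_of_nonneg_left (hTle m) (by positivity)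
      have hαne : α ≠ 0 := hα.ne'
      have hsumb' : ∑ i ∈ Finset.range m, a (i + 2) * b (m - (i + 1))
          ≤ -(a 0 / α) * b m - a 1 * b m := by
        have heq : α⁻¹ * -(a 0 + a 1 * α) * b m = -(a 0 / α) * b m - a 1 * b m := by
          field_simp
          ring
        linarith [hsumb, heq.le, heq.ge]
      have hmain : (a 0 / α) * b m ≤ a 0 * b (m + 1) := by
        rw [hrec m]
        linarith [hsumb']
      have hpos' : 0 < b (m + 1) := by
        nlinarith [hmain, mul_pos (div_pos h0 hα) hpos]
      have hb1 : b m ≤ α * b (m + 1) := by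
        calc b m = (α / a 0) * ((a 0 / α) * b m) := by field_simp
          _ ≤ (α / a 0) * (a 0 * b (m + 1)) :=
              mul_le_mul_of_nonneg_left hmain (by positivity)
          _ = α * b (m + 1) := by field_simp
      refine ⟨hpos', ?_⟩
      intro k hk
      rcases Nat.lt_or_ge k (m + 1) with hk' | hk'
      · have hkm : k ≤ m := by omega
        have h1 := hchain k hkm
        have h2 : α ^ (m - k) * b m ≤ α ^ (m - k) * (α * b (m + 1)) :=
          mul_le_mul_of_nonneg_left hb1 (by positivity)
        have h3 : α ^ (m - k) * (α * b (m + 1)) = α ^ (m + 1 - k) * b (m + 1) := by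
          have : m + 1 - k = (m - k) + 1 := by omega
          rw [this, pow_succ]
          ring
        linarith [h1, h2, h3.le, h3.ge]
      · have : k = m + 1 := by omega
        subst this
        simp
  refine ⟨IsUnit.of_mul_eq_one _ (PowerSeries.mul_inv_cancel _ hne), fun n => ?_⟩
  rw [hb n]
  exact (key n).1
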